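/- Let (p_k), (a_k), (w_k), (u_k) be sequences of nonnegative, integrable, F_k-measurable random variables such that for every k, E[p_{k+1} | F_k] ≤ (1 + a_k) p_k − u_k + w_k almost surely, and such that Σ_{k=0}^∞ a_k < ∞ and Σ_{k=0}^∞ w_k < ∞ almost surely. Then, almost surely, the sequence (p_k) converges to a finite nonnegative random variable and Σ_{k=0}^∞ u_k < ∞. (Lemma 4, Robbins–Siegmund) -/

import Mathlib

open MeasureTheory Filter
open scoped Topology ENNReal NNReal

namespace RobbinsSiegmundAux

lemma telescope (q c : ℕ → ℝ) :
    ∀ k, (∀ j < k, c j = 1) → q 0 + ∑ j ∈ Finset.range k, c j * (q (j + 1) - q j) = q k := by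
  intro k
  induction k with
  | zero => simp
  | succ m ih =>
    intro h
    rw [Finset.sum_range_succ, h m (by omega), ← add_assoc, ih (fun j hj => h j (by omega))]
    ring

lemma Ybound {q S c : ℕ → ℝ} {M : ℝ} (hM : 0 ≤ M)
    (hq : ∀ n, -S n ≤ q n) (hS0 : S 0 = 0) (hSmono : Monotone S)
    (hc : ∀ j, c j = if S (j + 1) ≤ M then 1 else 0) (k : ℕ) :
    -M ≤ q 0 + ∑ j ∈ Finset.range k, c j * (q (j + 1) - q j) := by
  classical
  have hSM : ∀ n, (∀ j < n, c j = 1) → S n ≤ M := by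
    intro n h
    cases n with
    | zero => simpa [hS0] using hM
    | succ m =>
      have hm := h m (Nat.lt_succ_self m)
      rw [hc m] at hm
      by_contra hS
      rw [if_neg hS] at hm; norm_num at hm
  by_cases hall : ∀ j < k, c j = 1
  · rw [telescope q c k hall]
    have := hSM k hall
    linarith [hq k]
  · push_neg at hall
    obtain ⟨j, hjk, hcj⟩ := hall
    have hex : ∃ i, c i ≠ 1 := ⟨j, hcj⟩
    set j₀ := Nat.find hex with hj₀
    have hj₀k : j₀ < k := lt_of_le_of_lt (Nat.find_min' hex hcj) hjk
    have hmin : ∀ i < j₀, c i = 1 := fun i hi => by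
      by_contra h; exact (Nat.find_min hex hi) h
    have hS₀ : ¬ S (j₀ + 1) ≤ M := by
      intro h
      have hspec := Nat.find_spec hex
      rw [hc j₀, if_pos h] at hspec
      exact hspec rfl
    have hzero : ∀ i, j₀ ≤ i → c i = 0 := by
      intro i hi
      rw [hc i, if_neg]
      intro h
      exact hS₀ (le_trans (hSmono (by omega)) h)
    have hsum : ∑ j ∈ Finset.range k, c j * (q (j + 1) - q j)
        = ∑ j ∈ Finset.range j₀, c j * (q (j + 1) - q j) := by
      refine (Finset.sum_subset (Finset.range_subset_range.2 hj₀k.le) ?_).symm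
      intro i hi hni
      simp only [Finset.mem_range] at hi hni
      rw [hzero i (by omega)]; ring
    rw [hsum, telescope q c j₀ hmin]
    have := hSM j₀ hmin
    linarith [hq j₀]

end RobbinsSiegmundAux

/-- **Lemma 4 (Robbins–Siegmund).** If nonnegative adapted integrable processes satisfy
`E[p_{k+1} | F_k] ≤ (1 + a_k) p_k − u_k + w_k` with `Σ a_k < ∞` and `Σ w_k < ∞` a.s.,
then a.s. `(p_k)` converges to a finite nonnegative limit and `Σ u_k < ∞`. -/
theorem robbins_siegmund
    {Ω : Type*} {m0 : MeasurableSpace Ω} (μ : Measure Ω) [IsProbabilityMeasure μ]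
    (ℱ : Filtration ℕ m0)
    (p a w u : ℕ → Ω → ℝ)
    (hp_meas : ∀ k, StronglyMeasurable[ℱ k] (p k))
    (ha_meas : ∀ k, StronglyMeasurable[ℱ k] (a k))
    (hw_meas : ∀ k, StronglyMeasurable[ℱ k] (w k))
    (hu_meas : ∀ k, StronglyMeasurable[ℱ k] (u k))
    (hp_int : ∀ k, Integrable (p k) μ)
    (ha_int : ∀ k, Integrable (a k) μ)
    (hw_int : ∀ k, Integrable (w k) μ)
    (hu_int : ∀ k, Integrable (u k) μ)
    (hp_nonneg : ∀ k ω, 0 ≤ p k ω)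
    (ha_nonneg : ∀ k ω, 0 ≤ a k ω)
    (hw_nonneg : ∀ k ω, 0 ≤ w k ω)
    (hu_nonneg : ∀ k ω, 0 ≤ u k ω)
    (hrec : ∀ k, μ[p (k + 1) | ℱ k] ≤ᵐ[μ]
      fun ω => (1 + a k ω) * p k ω - u k ω + w k ω)
    (ha_sum : ∀ᵐ ω ∂μ, Summable fun k => a k ω)
    (hw_sum : ∀ᵐ ω ∂μ, Summable fun k => w k ω) :
    ∀ᵐ ω ∂μ, (∃ L : ℝ, 0 ≤ L ∧ Tendsto (fun k => p k ω) atTop (𝓝 L)) ∧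
      Summable fun k => u k ω := by
  classical
  -- the discounting process
  set A : ℕ → Ω → ℝ := fun k ω => ∏ j ∈ Finset.range k, (1 + a j ω) with hA_def
  set B : ℕ → Ω → ℝ := fun k ω => (A k ω)⁻¹ with hB_def
  have hA1 : ∀ k ω, 1 ≤ A k ω := by
    intro k ω
    show (1:ℝ) ≤ ∏ j ∈ Finset.range k, (1 + a j ω)
    calc (1:ℝ) = ∏ _j ∈ Finset.range k, 1 := by simp
    _ ≤ ∏ j ∈ Finset.range k, (1 + a j ω) :=
      Finset.prod_le_prod (by norm_num) (fun j _ => by have := ha_nonneg j ω; linarith)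
  have hApos : ∀ k ω, 0 < A k ω := fun k ω => lt_of_lt_of_le one_pos (hA1 k ω)
  have hAsucc : ∀ k ω, A (k + 1) ω = A k ω * (1 + a k ω) := by
    intro k ω
    simp only [hA_def]
    exact Finset.prod_range_succ _ _
  have hBpos : ∀ k ω, 0 < B k ω := fun k ω => inv_pos.2 (hApos k ω)
  have hBle1 : ∀ k ω, B k ω ≤ 1 := fun k ω => inv_le_one_of_one_le₀ (hA1 k ω)
  have hBsucc : ∀ k ω, (1 + a k ω) * B (k + 1) ω = B k ω := by
    intro k ω
    have h1 : (0:ℝ) < 1 + a k ω := by have := ha_nonneg k ω; linarith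
    simp only [hB_def, hAsucc k ω, mul_inv]
    rw [mul_comm ((A k ω)⁻¹), ← mul_assoc, mul_inv_cancel₀ h1.ne', one_mul]
  -- measurability
  have hA_m : ∀ k n, k ≤ n + 1 → Measurable[ℱ n] (A k) := by
    intro k n hkn
    simp only [hA_def]
    apply Finset.measurable_prod
    intro j hj
    simp only [Finset.mem_range] at hj
    exact measurable_const.add
      ((ha_meas j).measurable.mono (ℱ.mono (by omega)) le_rfl)
  have hB_m : ∀ k n, k ≤ n + 1 → Measurable[ℱ n] (B k) := fun k n hkn => (hA_m k n hkn).inv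
  have hB_m0 : ∀ k, Measurable (B k) := fun k => (hB_m k k (by omega)).mono (ℱ.le k) le_rfl
  -- integrability of products with B
  have hint_mulB : ∀ (f : Ω → ℝ), Integrable f μ → ∀ k,
      Integrable (fun ω => f ω * B k ω) μ := by
    intro f hf k
    refine hf.mono (hf.1.mul ((hB_m0 k).aestronglyMeasurable)) (Eventually.of_forall fun ω => ?_)
    rw [norm_mul]
    have h1 : ‖B k ω‖ ≤ 1 := by
      rw [Real.norm_eq_abs, abs_of_pos (hBpos k ω)]; exact hBle1 k ω
    have h2 : (0:ℝ) ≤ ‖f ω‖ := norm_nonneg _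
    nlinarith
  -- core processes
  set q : ℕ → Ω → ℝ := fun k ω =>
    p k ω * B k ω + ∑ j ∈ Finset.range k, (u j ω - w j ω) * B (j + 1) ω with hq_def
  set S : ℕ → Ω → ℝ := fun k ω => ∑ j ∈ Finset.range k, w j ω * B (j + 1) ω with hS_def
  set c : ℕ → ℕ → Ω → ℝ := fun M k ω => if S (k + 1) ω ≤ (M : ℝ) then 1 else 0 with hc_def
  set Y : ℕ → ℕ → Ω → ℝ := fun M k ω =>
    q 0 ω + ∑ j ∈ Finset.range k, c M j ω * (q (j + 1) ω - q j ω) with hY_def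
  -- integrability
  have hq_int : ∀ k, Integrable (q k) μ := by
    intro k
    apply Integrable.add (hint_mulB _ (hp_int k) k)
    apply integrable_finset_sum
    intro j hj
    exact hint_mulB _ ((hu_int j).sub (hw_int j)) (j + 1)
  have hq_m : ∀ k, Measurable[ℱ k] (q k) := by
    intro k
    simp only [hq_def]
    apply Measurable.add
    · exact ((hp_meas k).measurable).mul (hB_m k k (by omega))
    · apply Finset.measurable_sum
      intro j hj
      simp only [Finset.mem_range] at hj
      exact (((hu_meas j).measurable.mono (ℱ.mono (by omega)) le_rfl).sub
        ((hw_meas j).measurable.mono (ℱ.mono (by omega)) le_rfl)).mul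
        (hB_m (j + 1) k (by omega))
  have hS_m : ∀ k n, k ≤ n + 1 → Measurable[ℱ n] (S k) := by
    intro k n hkn
    simp only [hS_def]
    apply Finset.measurable_sum
    intro j hj
    simp only [Finset.mem_range] at hj
    exact ((hw_meas j).measurable.mono (ℱ.mono (by omega)) le_rfl).mul
      (hB_m (j + 1) n (by omega))
  have hc_m : ∀ M k, Measurable[ℱ k] (c M k) := by
    intro M k
    simp only [hc_def]
    exact Measurable.ite (measurableSet_le (hS_m (k + 1) k le_rfl) measurable_const)
      measurable_const measurable_const
  have hc01 : ∀ M k ω, c M k ω = 0 ∨ c M k ω = 1 := by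
    intro M k ω
    simp only [hc_def]
    split <;> simp
  have hc_nonneg : ∀ M k ω, 0 ≤ c M k ω := by
    intro M k ω
    rcases hc01 M k ω with h | h <;> rw [h] <;> norm_num
  have hY_m : ∀ M k, Measurable[ℱ k] (Y M k) := by
    intro M k
    simp only [hY_def]
    apply Measurable.add
    · exact (hq_m 0).mono (ℱ.mono (Nat.zero_le k)) le_rfl
    · apply Finset.measurable_sum
      intro j hj
      simp only [Finset.mem_range] at hj
      exact ((hc_m M j).mono (ℱ.mono (by omega)) le_rfl).mul
        (((hq_m (j + 1)).mono (ℱ.mono (by omega)) le_rfl).sub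
          ((hq_m j).mono (ℱ.mono (by omega)) le_rfl))
  have hcdq_int : ∀ M k, Integrable (fun ω => c M k ω * (q (k + 1) ω - q k ω)) μ := by
    intro M k
    have hdq : Integrable (fun ω => q (k + 1) ω - q k ω) μ := (hq_int (k + 1)).sub (hq_int k)
    refine hdq.mono ?_ (Eventually.of_forall fun ω => ?_)
    · exact (((hc_m M k).mono (ℱ.le k) le_rfl).aestronglyMeasurable).mul hdq.1
    · rw [norm_mul]
      have h1 : ‖c M k ω‖ ≤ 1 := by
        rcases hc01 M k ω with h | h <;> rw [h] <;> norm_num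
      have h2 : (0:ℝ) ≤ ‖q (k + 1) ω - q k ω‖ := norm_nonneg _
      nlinarith
  have hY_int : ∀ M k, Integrable (Y M k) μ := by
    intro M k
    apply Integrable.add (hq_int 0)
    exact integrable_finset_sum _ fun j hj => hcdq_int M j
  -- the supermartingale inequality for q
  have hqcond : ∀ k, μ[q (k + 1) | ℱ k] ≤ᵐ[μ] q k := by
    intro k
    set D : Ω → ℝ := fun ω => ∑ j ∈ Finset.range (k + 1), (u j ω - w j ω) * B (j + 1) ω
      with hD_def
    have hD_int : Integrable D μ :=
      integrable_finset_sum _ fun j _ => hint_mulB _ ((hu_int j).sub (hw_int j)) (j + 1)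
    have hD_sm : StronglyMeasurable[ℱ k] D := by
      apply Measurable.stronglyMeasurable
      apply Finset.measurable_sum
      intro j hj
      simp only [Finset.mem_range] at hj
      exact (((hu_meas j).measurable.mono (ℱ.mono (by omega)) le_rfl).sub
        ((hw_meas j).measurable.mono (ℱ.mono (by omega)) le_rfl)).mul (hB_m (j + 1) k (by omega))
    have hB_sm : StronglyMeasurable[ℱ k] (B (k + 1)) :=
      (hB_m (k + 1) k le_rfl).stronglyMeasurable
    have hBp_int : Integrable (B (k + 1) * p (k + 1)) μ := by
      have h := hint_mulB _ (hp_int (k + 1)) (k + 1)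
      refine h.congr (Eventually.of_forall fun ω => ?_)
      simp [mul_comm]
    have hsplit : q (k + 1) = B (k + 1) * p (k + 1) + D := by
      funext ω
      simp only [hq_def, hD_def, Pi.add_apply, Pi.mul_apply]
      ring
    have h1 : μ[q (k + 1) | ℱ k] =ᵐ[μ] μ[B (k + 1) * p (k + 1) | ℱ k] + μ[D | ℱ k] := by
      rw [hsplit]; exact condExp_add hBp_int hD_int _
    have h2 : μ[B (k + 1) * p (k + 1) | ℱ k] =ᵐ[μ] B (k + 1) * μ[p (k + 1) | ℱ k] :=
      condExp_mul_of_stronglyMeasurable_left hB_sm hBp_int (hp_int (k + 1))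
    have h3 : μ[D | ℱ k] = D := condExp_of_stronglyMeasurable (ℱ.le k) hD_sm hD_int
    filter_upwards [h1, h2, hrec k] with ω h1ω h2ω hrω
    rw [h1ω, Pi.add_apply, h2ω, h3]
    have hBnn : 0 ≤ B (k + 1) ω := (hBpos (k + 1) ω).le
    have hmul : B (k + 1) ω * (μ[p (k + 1) | ℱ k]) ω
        ≤ B (k + 1) ω * ((1 + a k ω) * p k ω - u k ω + w k ω) :=
      mul_le_mul_of_nonneg_left hrω hBnn
    have hkey : B (k + 1) ω * ((1 + a k ω) * p k ω - u k ω + w k ω) + D ω = q k ω := by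
      simp only [hD_def, hq_def, Finset.sum_range_succ]
      linear_combination (p k ω) * hBsucc k ω
    calc (B (k + 1) * μ[p (k + 1) | ℱ k]) ω + D ω
        = B (k + 1) ω * (μ[p (k + 1) | ℱ k]) ω + D ω := rfl
      _ ≤ B (k + 1) ω * ((1 + a k ω) * p k ω - u k ω + w k ω) + D ω := by linarith
      _ = q k ω := hkey
  -- the supermartingale inequality for Y
  have hYcond : ∀ M k, μ[Y M (k + 1) | ℱ k] ≤ᵐ[μ] Y M k := by
    intro M k
    have hsplit : Y M (k + 1) = Y M k + fun ω => c M k ω * (q (k + 1) ω - q k ω) := by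
      funext ω
      simp only [hY_def, Finset.sum_range_succ, Pi.add_apply]
      ring
    have h1 : μ[Y M (k + 1) | ℱ k] =ᵐ[μ]
        μ[Y M k | ℱ k] + μ[fun ω => c M k ω * (q (k + 1) ω - q k ω) | ℱ k] := by
      rw [hsplit]; exact condExp_add (hY_int M k) (hcdq_int M k) _
    have h2 : μ[Y M k | ℱ k] = Y M k :=
      condExp_of_stronglyMeasurable (ℱ.le k) ((hY_m M k).stronglyMeasurable) (hY_int M k)
    have h3 : μ[fun ω => c M k ω * (q (k + 1) ω - q k ω) | ℱ k] =ᵐ[μ]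
        fun ω => c M k ω * (μ[q (k + 1) - q k | ℱ k]) ω :=
      condExp_mul_of_stronglyMeasurable_left ((hc_m M k).stronglyMeasurable) (hcdq_int M k)
        ((hq_int (k + 1)).sub (hq_int k))
    have h4 : μ[q (k + 1) - q k | ℱ k] =ᵐ[μ] μ[q (k + 1) | ℱ k] - μ[q k | ℱ k] :=
      condExp_sub (hq_int (k + 1)) (hq_int k) _
    have h5 : μ[q k | ℱ k] = q k :=
      condExp_of_stronglyMeasurable (ℱ.le k) ((hq_m k).stronglyMeasurable) (hq_int k)
    filter_upwards [h1, h3, h4, hqcond k] with ω h1ω h3ω h4ω hqω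
    rw [h1ω, Pi.add_apply, h2, h3ω, h4ω, Pi.sub_apply, h5]
    have hcn := hc_nonneg M k ω
    nlinarith
  -- lower bound on Y
  have hYlb : ∀ (M k : ℕ) (ω : Ω), -(M : ℝ) ≤ Y M k ω := by
    intro M k ω
    have hqlb : ∀ n, -(S n ω) ≤ q n ω := by
      intro n
      have h1 : -(S n ω) = 0 + ∑ j ∈ Finset.range n, -(w j ω * B (j + 1) ω) := by
        simp [hS_def]
      rw [h1]
      apply add_le_add
      · exact mul_nonneg (hp_nonneg n ω) (hBpos n ω).le
      · apply Finset.sum_le_sum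
        intro j hj
        have h2 := hu_nonneg j ω
        have h3 := (hBpos (j + 1) ω).le
        nlinarith
    have hS0 : S 0 ω = 0 := by simp [hS_def]
    have hSmono : Monotone (fun n => S n ω) := by
      apply monotone_nat_of_le_succ
      intro n
      simp only [hS_def, Finset.sum_range_succ]
      have := mul_nonneg (hw_nonneg n ω) (hBpos (n + 1) ω).le
      linarith
    simp only [hY_def]
    exact RobbinsSiegmundAux.Ybound (by positivity) hqlb hS0 hSmono
      (fun j => rfl) k
  -- bounded expectations
  have hEY : ∀ M k, ∫ ω, Y M k ω ∂μ ≤ ∫ ω, p 0 ω ∂μ := by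
    intro M k
    induction k with
    | zero =>
      apply integral_mono (hY_int M 0) (hp_int 0)
      intro ω
      simp only [hY_def, hq_def, Finset.range_zero, Finset.sum_empty, add_zero]
      nlinarith [hBle1 0 ω, hBpos 0 ω, hp_nonneg 0 ω]
    | succ n ih =>
      refine le_trans ?_ ih
      have h1 : ∫ ω, Y M (n + 1) ω ∂μ = ∫ ω, (μ[Y M (n + 1) | ℱ n]) ω ∂μ :=
        (integral_condExp (ℱ.le n)).symm
      rw [h1]
      exact integral_mono_ae integrable_condExp (hY_int M n) (hYcond M n)
  -- convergence of the stopped processes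
  have hconvY : ∀ᵐ ω ∂μ, ∀ M : ℕ, ∃ L, Tendsto (fun k => Y M k ω) atTop (𝓝 L) := by
    rw [ae_all_iff]
    intro M
    have hsub : Submartingale (fun k => -(Y M k)) ℱ μ := by
      refine submartingale_nat (fun k => ((hY_m M k).neg).stronglyMeasurable)
        (fun k => (hY_int M k).neg) (fun i => ?_)
      have hneg : μ[-(Y M (i + 1)) | ℱ i] =ᵐ[μ] -μ[Y M (i + 1) | ℱ i] := condExp_neg _ _
      filter_upwards [hneg, hYcond M i] with ω h1 h2
      rw [h1]
      simp only [Pi.neg_apply]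
      linarith
    set R : ℝ := ∫ ω, p 0 ω ∂μ + 2 * M with hR_def
    have hbdd : ∀ n, eLpNorm (fun ω => -(Y M n ω)) 1 μ ≤ ((R.toNNReal : ℝ≥0∞)) := by
      intro n
      rw [show ((R.toNNReal : ℝ≥0∞)) = ENNReal.ofReal R from rfl]
      have h1 : eLpNorm (fun ω => -(Y M n ω)) 1 μ = eLpNorm (Y M n) 1 μ := by
        rw [show (fun ω => -(Y M n ω)) = -(Y M n) from rfl, eLpNorm_neg]
      rw [h1, eLpNorm_one_eq_lintegral_enorm,
        ← ofReal_integral_norm_eq_lintegral_enorm (hY_int M n)]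
      apply ENNReal.ofReal_le_ofReal
      have h2 : ∫ ω, ‖Y M n ω‖ ∂μ ≤ ∫ ω, (Y M n ω + 2 * M) ∂μ := by
        apply integral_mono (hY_int M n).norm ((hY_int M n).add (integrable_const _))
        intro ω
        have hlb := hYlb M n ω
        have habs : |Y M n ω| ≤ Y M n ω + 2 * M := abs_le.2 ⟨by linarith, by linarith⟩
        simpa [Real.norm_eq_abs] using habs
      have h3 : ∫ ω, (Y M n ω + 2 * (M : ℝ)) ∂μ = ∫ ω, Y M n ω ∂μ + 2 * M := by
        rw [integral_add (hY_int M n) (integrable_const _), integral_const, probReal_univ,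
          one_smul]
      have h4 := hEY M n
      rw [hR_def]
      linarith
    filter_upwards [hsub.exists_ae_tendsto_of_bdd hbdd] with ω hω
    obtain ⟨L, hL⟩ := hω
    exact ⟨-L, by simpa using hL.neg⟩
  -- final pointwise argument
  filter_upwards [hconvY, ha_sum, hw_sum] with ω hYω haω hwω
  have hAm : Monotone fun k => A k ω := by
    apply monotone_nat_of_le_succ
    intro n
    rw [hAsucc n ω]
    have h1 := hA1 n ω
    have h2 := ha_nonneg n ω
    nlinarith
  have hAbd : ∀ k, A k ω ≤ Real.exp (∑' j, a j ω) := by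
    intro k
    have h1 : A k ω ≤ Real.exp (∑ j ∈ Finset.range k, a j ω) := by
      rw [Real.exp_sum]
      show ∏ j ∈ Finset.range k, (1 + a j ω) ≤ _
      apply Finset.prod_le_prod
      · intro j _; have := ha_nonneg j ω; linarith
      · intro j _; have := Real.add_one_le_exp (a j ω); linarith
    refine h1.trans (Real.exp_le_exp.2 ?_)
    exact haω.sum_le_tsum _ (fun i _ => ha_nonneg i ω)
  have hAbdd : BddAbove (Set.range fun k => A k ω) := by
    refine ⟨Real.exp (∑' j, a j ω), ?_⟩
    rintro x ⟨k, rfl⟩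
    exact hAbd k
  have hAtend : Tendsto (fun k => A k ω) atTop (𝓝 (⨆ k, A k ω)) :=
    tendsto_atTop_ciSup hAm hAbdd
  have hAinfge : ∀ k, A k ω ≤ ⨆ k, A k ω := fun k => le_ciSup hAbdd k
  have hAinf_pos : (0 : ℝ) < ⨆ k, A k ω := lt_of_lt_of_le (hApos 0 ω) (hAinfge 0)
  obtain ⟨M, hM⟩ := exists_nat_ge (∑' j, w j ω)
  have hSle : ∀ n, S n ω ≤ (M : ℝ) := by
    intro n
    have h1 : S n ω ≤ ∑ j ∈ Finset.range n, w j ω := by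
      simp only [hS_def]
      apply Finset.sum_le_sum
      intro j _
      nlinarith [hw_nonneg j ω, hBpos (j + 1) ω, hBle1 (j + 1) ω]
    have h2 : ∑ j ∈ Finset.range n, w j ω ≤ ∑' j, w j ω :=
      hwω.sum_le_tsum _ (fun i _ => hw_nonneg i ω)
    linarith
  have hc1 : ∀ j, c M j ω = 1 := by
    intro j
    simp only [hc_def]
    rw [if_pos (hSle (j + 1))]
  obtain ⟨ℓ, hℓY⟩ := hYω M
  have hYq : (fun k => Y M k ω) = fun k => q k ω := by
    funext k
    simp only [hY_def]
    exact RobbinsSiegmundAux.telescope (fun n => q n ω) (fun n => c M n ω) k (fun j _ => hc1 j)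
  rw [hYq] at hℓY
  have hwB_sum : Summable fun j => w j ω * B (j + 1) ω :=
    Summable.of_nonneg_of_le (fun j => mul_nonneg (hw_nonneg j ω) (hBpos (j + 1) ω).le)
      (fun j => by nlinarith [hw_nonneg j ω, hBle1 (j + 1) ω, hBpos (j + 1) ω]) hwω
  have hStend : Tendsto (fun n => S n ω) atTop (𝓝 (∑' j, w j ω * B (j + 1) ω)) := by
    have h := hwB_sum.hasSum.tendsto_sum_nat
    exact h
  have hr_tend : Tendsto (fun k => q k ω + S k ω) atTop
      (𝓝 (ℓ + ∑' j, w j ω * B (j + 1) ω)) := hℓY.add hStend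
  have hqS : ∀ k, q k ω + S k ω
      = p k ω * B k ω + ∑ j ∈ Finset.range k, u j ω * B (j + 1) ω := by
    intro k
    simp only [hq_def, hS_def]
    rw [add_assoc, ← Finset.sum_add_distrib]
    congr 1
    apply Finset.sum_congr rfl
    intro j _
    ring
  obtain ⟨C, hC⟩ := hr_tend.bddAbove_range
  have hUb : ∀ n, ∑ j ∈ Finset.range n, u j ω * B (j + 1) ω ≤ C := by
    intro n
    have h1 : q n ω + S n ω ≤ C := hC ⟨n, rfl⟩
    have h2 := hqS n
    nlinarith [mul_nonneg (hp_nonneg n ω) (hBpos n ω).le]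
  have huB_sum : Summable fun j => u j ω * B (j + 1) ω :=
    summable_of_sum_range_le (fun j => mul_nonneg (hu_nonneg j ω) (hBpos (j + 1) ω).le) hUb
  have hUtend : Tendsto (fun n => ∑ j ∈ Finset.range n, u j ω * B (j + 1) ω) atTop
      (𝓝 (∑' j, u j ω * B (j + 1) ω)) := huB_sum.hasSum.tendsto_sum_nat
  have hpB_tend : Tendsto (fun k => p k ω * B k ω) atTop
      (𝓝 (ℓ + (∑' j, w j ω * B (j + 1) ω) - ∑' j, u j ω * B (j + 1) ω)) := by
    have h1 := hr_tend.sub hUtend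
    have h2 : (fun k => q k ω + S k ω - ∑ j ∈ Finset.range k, u j ω * B (j + 1) ω)
        = fun k => p k ω * B k ω := by
      funext k
      rw [hqS k]; ring
    rwa [h2] at h1
  have hL0 : 0 ≤ ℓ + (∑' j, w j ω * B (j + 1) ω) - ∑' j, u j ω * B (j + 1) ω :=
    ge_of_tendsto' hpB_tend (fun k => mul_nonneg (hp_nonneg k ω) (hBpos k ω).le)
  constructor
  · refine ⟨(ℓ + (∑' j, w j ω * B (j + 1) ω) - ∑' j, u j ω * B (j + 1) ω) * (⨆ k, A k ω),
      mul_nonneg hL0 hAinf_pos.le, ?_⟩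
    have h1 := hpB_tend.mul hAtend
    have h2 : (fun k => p k ω * B k ω * A k ω) = fun k => p k ω := by
      funext k
      have h3 : B k ω * A k ω = 1 := by
        simp only [hB_def]
        exact inv_mul_cancel₀ (hApos k ω).ne'
      calc p k ω * B k ω * A k ω = p k ω * (B k ω * A k ω) := by ring
        _ = p k ω := by rw [h3, mul_one]
    rwa [h2] at h1
  · have hle : ∀ j, u j ω ≤ (u j ω * B (j + 1) ω) * (⨆ k, A k ω) := by
      intro j
      have h1 : u j ω * B (j + 1) ω * A (j + 1) ω = u j ω := by
        have h3 : B (j + 1) ω * A (j + 1) ω = 1 := by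
          simp only [hB_def]
          exact inv_mul_cancel₀ (hApos (j + 1) ω).ne'
        calc u j ω * B (j + 1) ω * A (j + 1) ω = u j ω * (B (j + 1) ω * A (j + 1) ω) := by ring
          _ = u j ω := by rw [h3, mul_one]
      have h2 : u j ω * B (j + 1) ω * A (j + 1) ω ≤ u j ω * B (j + 1) ω * (⨆ k, A k ω) :=
        mul_le_mul_of_nonneg_left (hAinfge (j + 1))
          (mul_nonneg (hu_nonneg j ω) (hBpos (j + 1) ω).le)
      linarith
    exact Summable.of_nonneg_of_le (fun j => hu_nonneg j ω) hle (huB_sum.mul_right _)
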